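/- Fix ρ ∈ (0,1) and for b ≠ 0 let a(b) = (e^{2bρ} − 1)/(e^b + e^{2bρ} − e^{b(2ρ−1)} − 1). Then β(x; a(b), b) = e^{bx}(e^{2bρ}−1) / [e^{bx}(e^{2bρ}−1) + (e^b − e^{b(2ρ−1)})], and as b → +∞, β(x; a(b), b) → 1 if x + 2ρ > 1 and β(x; a(b), b) → 0 if x + 2ρ < 1. -/

import Mathlib

open Real Filter

private lemma exp_lin_to_zero (c : ℝ) (hc : c < 0) :
    Tendsto (fun b : ℝ => Real.exp (b * c)) atTop (nhds 0) :=
  Real.tendsto_exp_atBot.comp (tendsto_id.atTop_mul_const_of_neg hc)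

/-- With a(b) chosen so that ∫β = 2ρ, one has the explicit formula for β(x;a(b),b),
and β(x;a(b),b) → 1 if x + 2ρ > 1, → 0 if x + 2ρ < 1, as b → ∞. -/
theorem stmt6 (ρ : ℝ) (hρ : ρ ∈ Set.Ioo (0 : ℝ) 1) (x : ℝ) (hx : x ∈ Set.Ioo (-1 : ℝ) 1)
    (a : ℝ → ℝ)
    (ha : ∀ b, a b = (Real.exp (2 * b * ρ) - 1) /
      (Real.exp b + Real.exp (2 * b * ρ) - Real.exp (b * (2 * ρ - 1)) - 1)) :
    (∀ b : ℝ, b ≠ 0 →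
      Real.exp (b * x) * a b / (Real.exp (b * x) * a b + (1 - a b)) =
        Real.exp (b * x) * (Real.exp (2 * b * ρ) - 1) /
          (Real.exp (b * x) * (Real.exp (2 * b * ρ) - 1) +
            (Real.exp b - Real.exp (b * (2 * ρ - 1)))))
    ∧ (x + 2 * ρ > 1 →
        Tendsto (fun b => Real.exp (b * x) * a b / (Real.exp (b * x) * a b + (1 - a b)))
          atTop (nhds 1))
    ∧ (x + 2 * ρ < 1 →
        Tendsto (fun b => Real.exp (b * x) * a b / (Real.exp (b * x) * a b + (1 - a b)))
          atTop (nhds 0)) := by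
  obtain ⟨hρ0, hρ1⟩ := hρ
  obtain ⟨hx0, hx1⟩ := hx
  -- key identity
  have key : ∀ b : ℝ, b ≠ 0 →
      Real.exp (b * x) * a b / (Real.exp (b * x) * a b + (1 - a b)) =
        Real.exp (b * x) * (Real.exp (2 * b * ρ) - 1) /
          (Real.exp (b * x) * (Real.exp (2 * b * ρ) - 1) +
            (Real.exp b - Real.exp (b * (2 * ρ - 1)))) := by
    intro b hb
    have hD : Real.exp b + Real.exp (2 * b * ρ) - Real.exp (b * (2 * ρ - 1)) - 1 ≠ 0 := by
      have hprod : Real.exp b * Real.exp (b * (2 * ρ - 1)) = Real.exp (2 * b * ρ) := by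
        rw [← Real.exp_add]; ring_nf
      have hfac : Real.exp b + Real.exp (2 * b * ρ) - Real.exp (b * (2 * ρ - 1)) - 1
          = (Real.exp b - 1) * (1 + Real.exp (b * (2 * ρ - 1))) := by
        linear_combination -hprod
      rw [hfac]
      have h1 : Real.exp b - 1 ≠ 0 := by
        rcases lt_or_gt_of_ne hb with h | h
        · have : Real.exp b < 1 := by rw [← Real.exp_zero]; exact Real.exp_lt_exp.2 h
          linarith
        · have : (1:ℝ) < Real.exp b := by rw [← Real.exp_zero]; exact Real.exp_lt_exp.2 h
          linarith
      have h2 : (0:ℝ) < 1 + Real.exp (b * (2 * ρ - 1)) := by positivity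
      exact mul_ne_zero h1 (ne_of_gt h2)
    have hNM : Real.exp (b * x) * (Real.exp (2 * b * ρ) - 1) +
        (Real.exp b - Real.exp (b * (2 * ρ - 1))) ≠ 0 := by
      rcases lt_or_gt_of_ne hb with h | h
      · have h1 : Real.exp (2 * b * ρ) < 1 := by
          rw [← Real.exp_zero]; exact Real.exp_lt_exp.2 (by nlinarith)
        have h2 : Real.exp b < Real.exp (b * (2 * ρ - 1)) := by
          exact Real.exp_lt_exp.2 (by nlinarith)
        have h3 : 0 < Real.exp (b * x) := Real.exp_pos _
        nlinarith
      · have h1 : (1:ℝ) < Real.exp (2 * b * ρ) := by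
          rw [← Real.exp_zero]; exact Real.exp_lt_exp.2 (by nlinarith)
        have h2 : Real.exp (b * (2 * ρ - 1)) < Real.exp b := by
          exact Real.exp_lt_exp.2 (by nlinarith)
        have h3 : 0 < Real.exp (b * x) := Real.exp_pos _
        nlinarith
    rw [ha]
    have h1a : (1 : ℝ) - (Real.exp (2 * b * ρ) - 1) /
        (Real.exp b + Real.exp (2 * b * ρ) - Real.exp (b * (2 * ρ - 1)) - 1)
        = (Real.exp b - Real.exp (b * (2 * ρ - 1))) /
        (Real.exp b + Real.exp (2 * b * ρ) - Real.exp (b * (2 * ρ - 1)) - 1) := by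
      field_simp
      ring
    rw [h1a]
    rw [show Real.exp (b * x) * ((Real.exp (2 * b * ρ) - 1) /
        (Real.exp b + Real.exp (2 * b * ρ) - Real.exp (b * (2 * ρ - 1)) - 1))
        = (Real.exp (b * x) * (Real.exp (2 * b * ρ) - 1)) /
        (Real.exp b + Real.exp (2 * b * ρ) - Real.exp (b * (2 * ρ - 1)) - 1) from
      (mul_div_assoc _ _ _).symm]
    rw [← add_div, div_div_div_cancel_right₀ hD]
  refine ⟨key, ?_, ?_⟩
  · -- x + 2ρ > 1 : limit 1
    intro hgt
    have hev : ∀ᶠ b in atTop, (fun b => Real.exp (b * x) * (Real.exp (2 * b * ρ) - 1) /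
          (Real.exp (b * x) * (Real.exp (2 * b * ρ) - 1) +
            (Real.exp b - Real.exp (b * (2 * ρ - 1))))) b
        = Real.exp (b * x) * a b / (Real.exp (b * x) * a b + (1 - a b)) := by
      filter_upwards [eventually_gt_atTop (0:ℝ)] with b hb
      exact (key b (ne_of_gt hb)).symm
    refine Tendsto.congr' hev ?_
    have heq : ∀ b : ℝ, Real.exp (b * x) * (Real.exp (2 * b * ρ) - 1) /
          (Real.exp (b * x) * (Real.exp (2 * b * ρ) - 1) +
            (Real.exp b - Real.exp (b * (2 * ρ - 1))))
        = (1 - Real.exp (b * (-(2*ρ)))) /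
          ((1 - Real.exp (b * (-(2*ρ)))) +
            (Real.exp (b * (1 - x - 2*ρ)) - Real.exp (b * (-1 - x)))) := by
      intro b
      have hE : Real.exp (b * (x + 2*ρ)) ≠ 0 := ne_of_gt (Real.exp_pos _)
      have e1 : Real.exp (b * (x + 2*ρ)) * Real.exp (b * (-(2*ρ))) = Real.exp (b * x) := by
        rw [← Real.exp_add]; ring_nf
      have e2 : Real.exp (b * (x + 2*ρ)) * Real.exp (b * (1 - x - 2*ρ)) = Real.exp b := by
        rw [← Real.exp_add]; ring_nf
      have e3 : Real.exp (b * (x + 2*ρ)) * Real.exp (b * (-1 - x))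
          = Real.exp (b * (2 * ρ - 1)) := by
        rw [← Real.exp_add]; ring_nf
      have e4 : Real.exp (b * x) * Real.exp (2 * b * ρ) = Real.exp (b * (x + 2*ρ)) := by
        rw [← Real.exp_add]; ring_nf
      have hN : Real.exp (b * x) * (Real.exp (2 * b * ρ) - 1)
          = Real.exp (b * (x + 2*ρ)) * (1 - Real.exp (b * (-(2*ρ)))) := by
        linear_combination e4 + e1
      have hM : Real.exp b - Real.exp (b * (2 * ρ - 1))
          = Real.exp (b * (x + 2*ρ)) * (Real.exp (b * (1 - x - 2*ρ)) - Real.exp (b * (-1 - x))) := by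
        linear_combination e3 - e2
      rw [hN, hM, ← mul_add, mul_div_mul_left _ _ hE]
    simp only [heq]
    have hn : Tendsto (fun b : ℝ => 1 - Real.exp (b * (-(2*ρ)))) atTop (nhds 1) := by
      have := (exp_lin_to_zero (-(2*ρ)) (by linarith)).const_sub 1
      simpa using this
    have hm : Tendsto (fun b : ℝ => Real.exp (b * (1 - x - 2*ρ)) - Real.exp (b * (-1 - x)))
        atTop (nhds 0) := by
      have h1 := exp_lin_to_zero (1 - x - 2*ρ) (by linarith)
      have h2 := exp_lin_to_zero (-1 - x) (by linarith)
      simpa using h1.sub h2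
    have := hn.div (hn.add hm) (by norm_num)
    rwa [add_zero, div_one] at this
  · -- x + 2ρ < 1 : limit 0
    intro hlt
    have hev : ∀ᶠ b in atTop, (fun b => Real.exp (b * x) * (Real.exp (2 * b * ρ) - 1) /
          (Real.exp (b * x) * (Real.exp (2 * b * ρ) - 1) +
            (Real.exp b - Real.exp (b * (2 * ρ - 1))))) b
        = Real.exp (b * x) * a b / (Real.exp (b * x) * a b + (1 - a b)) := by
      filter_upwards [eventually_gt_atTop (0:ℝ)] with b hb
      exact (key b (ne_of_gt hb)).symm
    refine Tendsto.congr' hev ?_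
    have heq : ∀ b : ℝ, Real.exp (b * x) * (Real.exp (2 * b * ρ) - 1) /
          (Real.exp (b * x) * (Real.exp (2 * b * ρ) - 1) +
            (Real.exp b - Real.exp (b * (2 * ρ - 1))))
        = (Real.exp (b * (x + 2*ρ - 1)) - Real.exp (b * (x - 1))) /
          ((Real.exp (b * (x + 2*ρ - 1)) - Real.exp (b * (x - 1))) +
            (1 - Real.exp (b * (2*ρ - 2)))) := by
      intro b
      have hE : Real.exp b ≠ 0 := ne_of_gt (Real.exp_pos _)
      have e1 : Real.exp b * Real.exp (b * (x + 2*ρ - 1))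
          = Real.exp (b * x) * Real.exp (2 * b * ρ) := by
        rw [← Real.exp_add, ← Real.exp_add]; ring_nf
      have e2 : Real.exp b * Real.exp (b * (x - 1)) = Real.exp (b * x) := by
        rw [← Real.exp_add]; ring_nf
      have e3 : Real.exp b * Real.exp (b * (2*ρ - 2)) = Real.exp (b * (2 * ρ - 1)) := by
        rw [← Real.exp_add]; ring_nf
      have hN : Real.exp (b * x) * (Real.exp (2 * b * ρ) - 1)
          = Real.exp b * (Real.exp (b * (x + 2*ρ - 1)) - Real.exp (b * (x - 1))) := by
        linear_combination e2 - e1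
      have hM : Real.exp b - Real.exp (b * (2 * ρ - 1))
          = Real.exp b * (1 - Real.exp (b * (2*ρ - 2))) := by
        linear_combination e3
      rw [hN, hM, ← mul_add, mul_div_mul_left _ _ hE]
    simp only [heq]
    have hn : Tendsto (fun b : ℝ => Real.exp (b * (x + 2*ρ - 1)) - Real.exp (b * (x - 1)))
        atTop (nhds 0) := by
      have h1 := exp_lin_to_zero (x + 2*ρ - 1) (by linarith)
      have h2 := exp_lin_to_zero (x - 1) (by linarith)
      simpa using h1.sub h2
    have hm : Tendsto (fun b : ℝ => 1 - Real.exp (b * (2*ρ - 2))) atTop (nhds 1) := by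
      have := (exp_lin_to_zero (2*ρ - 2) (by linarith)).const_sub 1
      simpa using this
    have := hn.div (hn.add hm) (by norm_num)
    rwa [zero_add, div_one] at this
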